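/- Let 𝒜 = (Q, A, τ) be a Mealy automaton with Q and A both finite, let S be the semigroup generated by 𝒜, and let T be a finitely generated subsemigroup of S. Then T is infinite if and only if there exists ξ ∈ A^ω whose orbit T·ξ = {t·ξ : t ∈ T} is infinite. -/

import Mathlib

/-!
Framework for Mealy automata `𝒜 = (Q, A, τ)` with `τ q a = (q·a, q@a)`.

* `Mealy.act τ q` is the endomorphism of the free monoid `A*` (modelled as `List A`)
  induced by the state `q`, defined by `q·(a⌢u) = (q·a)⌢((q@a)·u)`.
* `Mealy.Sgp τ` is the semigroup (with identity adjoined, i.e. the submonoid) of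
  `End(A*)` generated by the states.
* `Mealy.extω f ξ` is the extension of a length- and prefix-preserving endomorphism
  `f` of `A*` to right-infinite words `ξ : ℕ → A`: its `n`-th letter is the `n`-th
  letter of the image of the length-`(n+1)` prefix of `ξ`.
* `Mealy.catω v ξ` is the concatenation `v⌢ξ` of a finite word with an infinite word.
* `Mealy.orbit τ u` and `Mealy.orbitω τ ξ` are the orbits `S·u` and `S·ξ`.
* `Mealy.mval τ v` is `m_v = sup_{ξ ∈ A^ω} |S·(v⌢ξ)| ∈ ℕ∞`.
* `Mealy.sect f w` is the section `f@w`, characterized for `f ∈ S` by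
  `f·(w⌢u) = (f·w)⌢((f@w)·u)`.
-/

namespace Mealy

variable {Q A : Type*}

/-- The action of a state on a finite word: `q·(a⌢u) = (q·a)⌢((q@a)·u)`. -/
def act (τ : Q → A → A × Q) : Q → List A → List A
  | _, [] => []
  | q, a :: u => (τ q a).1 :: act τ (τ q a).2 u

/-- The semigroup `S ≤ End(A*)` generated by the states of the automaton
(as a submonoid of `Function.End (List A)`, where multiplication is composition). -/
def Sgp (τ : Q → A → A × Q) : Submonoid (Function.End (List A)) :=
  Submonoid.closure { f : Function.End (List A) | ∃ q : Q, f = act τ q }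

/-- Extension of a (length- and prefix-preserving) endomorphism of `A*` to `A^ω`:
the `n`-th letter of `f·ξ` is the `n`-th letter of the image of the prefix of `ξ`
of length `n+1`. -/
def extω (f : Function.End (List A)) (ξ : ℕ → A) : ℕ → A :=
  fun n => (f ((List.range (n + 1)).map ξ)).getD n (ξ n)

/-- Concatenation `v⌢ξ` of a finite word with a right-infinite word. -/
def catω (v : List A) (ξ : ℕ → A) : ℕ → A :=
  fun n => v.getD n (ξ (n - v.length))

/-- The orbit `S·u` of a finite word. -/
def orbit (τ : Q → A → A × Q) (u : List A) : Set (List A) :=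
  (fun f : Function.End (List A) => f u) '' (Sgp τ : Set (Function.End (List A)))

/-- The orbit `S·ξ` of a right-infinite word. -/
def orbitω (τ : Q → A → A × Q) (ξ : ℕ → A) : Set (ℕ → A) :=
  (fun f : Function.End (List A) => extω f ξ) '' (Sgp τ : Set (Function.End (List A)))

/-- `m_v = sup_{ξ ∈ A^ω} |S·(v⌢ξ)| ∈ ℕ ∪ {∞}`. -/
noncomputable def mval (τ : Q → A → A × Q) (v : List A) : ℕ∞ :=
  ⨆ ξ : ℕ → A, (orbitω τ (catω v ξ)).encard

/-- The section `f@w` of an endomorphism of `A*` at the word `w`. -/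
def sect (f : Function.End (List A)) (w : List A) : Function.End (List A) :=
  fun u => (f (w ++ u)).drop w.length

end Mealy

namespace Mealy

variable {Q A : Type*}

/-! ### Basic facts about `Function.End` -/

lemma end_mul_apply (f g : Function.End (List A)) (x : List A) : (f * g) x = f (g x) := rfl

lemma end_one_apply (x : List A) : (1 : Function.End (List A)) x = x := rfl

/-! ### Length and prefix preservation -/

/-- length preserving -/
def LP (f : Function.End (List A)) : Prop := ∀ u, (f u).length = u.length

/-- splitting property -/
def SP (f : Function.End (List A)) : Prop := ∀ u w, f (u ++ w) = f u ++ sect f u w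

lemma sect_apply (f : Function.End (List A)) (w u : List A) :
    sect f w u = (f (w ++ u)).drop w.length := rfl

lemma sect_append (f : Function.End (List A)) (u w : List A) :
    sect f (u ++ w) = sect (sect f u) w := by
  funext z
  show (f ((u ++ w) ++ z)).drop (u ++ w).length = ((f (u ++ (w ++ z))).drop u.length).drop w.length
  rw [List.drop_drop, List.append_assoc, List.length_append]

lemma LP.one : LP (1 : Function.End (List A)) := fun _ => rfl

lemma SP.one : SP (1 : Function.End (List A)) := by
  intro u w
  show u ++ w = u ++ (u ++ w).drop u.length
  rw [List.drop_left]

lemma sect_one (u : List A) : sect (1 : Function.End (List A)) u = 1 := by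
  funext w
  show (u ++ w).drop u.length = w
  rw [List.drop_left]

lemma LP.sect {f : Function.End (List A)} (hf : LP f) (u : List A) : LP (Mealy.sect f u) := by
  intro w
  show ((f (u ++ w)).drop u.length).length = w.length
  rw [List.length_drop, hf (u ++ w), List.length_append]
  omega

lemma sect_mul {f g : Function.End (List A)} (hg : LP g) (hgs : SP g)
    (u : List A) : sect (f * g) u = sect f (g u) * sect g u := by
  funext w
  show (f (g (u ++ w))).drop u.length = sect f (g u) (sect g u w)
  rw [hgs u w]
  show (f (g u ++ sect g u w)).drop u.length = (f (g u ++ sect g u w)).drop (g u).length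
  rw [hg u]

lemma LP.mul {f g : Function.End (List A)} (hf : LP f) (hg : LP g) : LP (f * g) :=
  fun u => by rw [end_mul_apply, hf, hg]

lemma SP.mul {f g : Function.End (List A)} (hfs : SP f) (hg : LP g)
    (hgs : SP g) : SP (f * g) := by
  intro u w
  rw [sect_mul hg hgs, end_mul_apply, hgs, hfs, end_mul_apply]
  rfl

/-! ### act lemmas -/

def actE (τ : Q → A → A × Q) (q : Q) : Function.End (List A) := act τ q

lemma actE_apply (τ : Q → A → A × Q) (q : Q) (u : List A) : actE τ q u = act τ q u := rfl

def actSt (τ : Q → A → A × Q) : Q → List A → Q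
  | q, [] => q
  | q, a :: u => actSt τ (τ q a).2 u

lemma act_length (τ : Q → A → A × Q) (q : Q) (u : List A) :
    (act τ q u).length = u.length := by
  induction u generalizing q with
  | nil => rfl
  | cons a u ih => simp [act, ih]

lemma act_append (τ : Q → A → A × Q) (q : Q) (u w : List A) :
    act τ q (u ++ w) = act τ q u ++ act τ (actSt τ q u) w := by
  induction u generalizing q with
  | nil => rfl
  | cons a u ih => simp [act, actSt, ih]

lemma sect_act (τ : Q → A → A × Q) (q : Q) (u : List A) :
    sect (actE τ q) u = actE τ (actSt τ q u) := by
  funext w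
  show (act τ q (u ++ w)).drop u.length = act τ (actSt τ q u) w
  rw [act_append]
  have h : u.length = (act τ q u).length := (act_length τ q u).symm
  rw [h, List.drop_left]

lemma act_LP (τ : Q → A → A × Q) (q : Q) : LP (actE τ q) :=
  fun u => act_length τ q u

lemma act_SP (τ : Q → A → A × Q) (q : Q) : SP (actE τ q) := by
  intro u w
  rw [sect_act]
  exact act_append τ q u w

/-! ### products of acts -/

lemma prod_LP_SP {l : List (Function.End (List A))} (h : ∀ x ∈ l, LP x ∧ SP x) :
    LP l.prod ∧ SP l.prod := by
  induction l with
  | nil => exact ⟨LP.one, SP.one⟩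
  | cons g l ih =>
    have hg := h g (by simp)
    have hl := ih (fun x hx => h x (by simp [hx]))
    rw [List.prod_cons]
    exact ⟨hg.1.mul hl.1, hg.2.mul hl.1 hl.2⟩

lemma list_acts (τ : Q → A → A × Q) :
    ∀ l : List (Function.End (List A)), (∀ y ∈ l, ∃ q : Q, y = act τ q) →
      ∃ qs : List Q, l.prod = (qs.map (actE τ)).prod := by
  intro l
  induction l with
  | nil => exact fun _ => ⟨[], rfl⟩
  | cons g l ih =>
    intro hl
    obtain ⟨qs, hqs⟩ := ih (fun y hy => hl y (by simp [hy]))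
    obtain ⟨q, hq⟩ := hl g (by simp)
    refine ⟨q :: qs, ?_⟩
    simp only [List.map_cons, List.prod_cons, ← hqs]
    rw [hq]
    rfl

lemma mem_sgp_list {τ : Q → A → A × Q} {f : Function.End (List A)} (hf : f ∈ Sgp τ) :
    ∃ qs : List Q, f = (qs.map (actE τ)).prod := by
  obtain ⟨l, hl, hprod⟩ := Submonoid.exists_list_of_mem_closure hf
  obtain ⟨qs, hqs⟩ := list_acts τ l hl
  exact ⟨qs, by rw [← hprod, hqs]⟩

lemma acts_LP_SP (τ : Q → A → A × Q) (qs : List Q) :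
    LP ((qs.map (actE τ)).prod) ∧ SP ((qs.map (actE τ)).prod) :=
  prod_LP_SP (by
    intro x hx
    simp only [List.mem_map] at hx
    obtain ⟨q, _, rfl⟩ := hx
    exact ⟨act_LP τ q, act_SP τ q⟩)

lemma sgp_LP_SP {τ : Q → A → A × Q} {f : Function.End (List A)} (hf : f ∈ Sgp τ) :
    LP f ∧ SP f := by
  obtain ⟨qs, rfl⟩ := mem_sgp_list hf
  exact acts_LP_SP τ qs

/-! ### sections of products of acts -/

def sectSt (τ : Q → A → A × Q) : List Q → List A → List Q
  | [], _ => []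
  | q :: qs, u => actSt τ q ((qs.map (actE τ)).prod u) :: sectSt τ qs u

lemma sectSt_length (τ : Q → A → A × Q) (qs : List Q) (u : List A) :
    (sectSt τ qs u).length = qs.length := by
  induction qs with
  | nil => rfl
  | cons q qs ih => simp [sectSt, ih]

lemma sect_prod (τ : Q → A → A × Q) (qs : List Q) (u : List A) :
    sect ((qs.map (actE τ)).prod) u = ((sectSt τ qs u).map (actE τ)).prod := by
  induction qs with
  | nil => simpa [sectSt] using sect_one u
  | cons q qs ih =>
    have hR := acts_LP_SP τ qs
    simp only [List.map_cons, List.prod_cons, sectSt]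
    rw [sect_mul hR.1 hR.2, sect_act, ih]

end Mealy

namespace Mealy

variable {Q A : Type*}

section Machinery

variable (τ : Q → A → A × Q) (F : Set (Function.End (List A)))

/-- membership in the submonoid generated by `F`, via explicit lists -/
def Mem (t : Function.End (List A)) : Prop :=
  ∃ l : List (Function.End (List A)), (∀ x ∈ l, x ∈ F) ∧ l.prod = t

variable {τ F}

lemma Mem.one : Mem F 1 := ⟨[], by simp, rfl⟩

lemma Mem.gen {g : Function.End (List A)} (hg : g ∈ F) : Mem F g :=
  ⟨[g], by simpa using hg, by simp⟩

lemma Mem.mul {s t : Function.End (List A)} (hs : Mem F s) (ht : Mem F t) :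
    Mem F (s * t) := by
  obtain ⟨l1, h1, rfl⟩ := hs
  obtain ⟨l2, h2, rfl⟩ := ht
  refine ⟨l1 ++ l2, ?_, by simp⟩
  intro x hx
  rcases List.mem_append.mp hx with h | h
  · exact h1 x h
  · exact h2 x h

lemma Mem.lp_sp (hFS : ∀ g ∈ F, g ∈ Sgp τ) {t : Function.End (List A)} (ht : Mem F t) :
    LP t ∧ SP t := by
  obtain ⟨l, hl, rfl⟩ := ht
  exact prod_LP_SP (fun x hx => sgp_LP_SP (hFS x (hl x hx)))

variable (F)

/-- the orbit of a finite word under the monoid generated by `F` -/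
def Orb (u : List A) : Set (List A) := {w | ∃ t, Mem F t ∧ t u = w}

variable {F}

lemma self_mem_orb (u : List A) : u ∈ Orb F u := ⟨1, Mem.one, rfl⟩

lemma act_mem_orb {u x : List A} (hx : x ∈ Orb F u) {t : Function.End (List A)}
    (ht : Mem F t) : t x ∈ Orb F u := by
  obtain ⟨s, hs, rfl⟩ := hx
  exact ⟨t * s, ht.mul hs, rfl⟩

lemma orb_length (hFS : ∀ g ∈ F, g ∈ Sgp τ) {u x : List A} (hx : x ∈ Orb F u) :
    x.length = u.length := by
  obtain ⟨t, ht, rfl⟩ := hx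
  exact (ht.lp_sp hFS).1 u

lemma orb_finite [Finite A] (hFS : ∀ g ∈ F, g ∈ Sgp τ) (u : List A) :
    (Orb F u).Finite := by
  refine Set.Finite.subset (List.finite_length_le A u.length) ?_
  intro x hx
  exact le_of_eq (orb_length hFS hx)

/-- the orbit as a finset -/
noncomputable def Ofin [Finite A] (hFS : ∀ g ∈ F, g ∈ Sgp τ) (u : List A) :
    Finset (List A) := (orb_finite hFS u).toFinset

lemma mem_Ofin [Finite A] (hFS : ∀ g ∈ F, g ∈ Sgp τ) {u x : List A} :
    x ∈ Ofin hFS u ↔ x ∈ Orb F u := Set.Finite.mem_toFinset _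

lemma Ofin_card_pos [Finite A] (hFS : ∀ g ∈ F, g ∈ Sgp τ) (u : List A) :
    0 < (Ofin hFS u).card :=
  Finset.card_pos.mpr ⟨u, (mem_Ofin hFS).mpr (self_mem_orb u)⟩

/-! ### The finite set `P` of possible sections of generators -/

end Machinery

section PsetSec

variable (τ : Q → A → A × Q)

/-- a choice of state-list representation for elements of `Sgp τ` -/
noncomputable def qsOf (g : Function.End (List A)) : List Q := by
  classical exact if h : g ∈ Sgp τ then Classical.choose (mem_sgp_list h) else []

lemma qsOf_spec {g : Function.End (List A)} (h : g ∈ Sgp τ) :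
    g = (((qsOf τ g).map (actE τ)).prod) := by
  classical
  rw [qsOf]
  simp only [dif_pos h]
  exact Classical.choose_spec (mem_sgp_list h)

variable (F : Set (Function.End (List A)))

/-- bound on the lengths of state-list representations of the generators -/
noncomputable def Nbound (hFfin : F.Finite) : ℕ :=
  hFfin.toFinset.sup (fun g => (qsOf τ g).length)

/-- the set of products of at most `Nbound` states; contains every section of every
generator, and is closed under sections -/
def Pset (hFfin : F.Finite) : Set (Function.End (List A)) :=
  {f | ∃ qs : List Q, qs.length ≤ Nbound τ F hFfin ∧ f = (qs.map (actE τ)).prod}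

variable {τ F}

lemma Pset_finite [Finite Q] (hFfin : F.Finite) : (Pset τ F hFfin).Finite := by
  have h1 : {qs : List Q | qs.length ≤ Nbound τ F hFfin}.Finite :=
    List.finite_length_le Q _
  refine Set.Finite.subset (h1.image (fun qs => ((qs.map (actE τ)).prod))) ?_
  rintro f ⟨qs, hqs, rfl⟩
  exact ⟨qs, hqs, rfl⟩

lemma one_mem_Pset (hFfin : F.Finite) : (1 : Function.End (List A)) ∈ Pset τ F hFfin :=
  ⟨[], by simp, by simp⟩

lemma sect_mem_Pset (hFfin : F.Finite) (hFS : ∀ g ∈ F, g ∈ Sgp τ)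
    {g : Function.End (List A)} (hg : g ∈ F) (u : List A) :
    sect g u ∈ Pset τ F hFfin := by
  have hspec := qsOf_spec τ (hFS g hg)
  refine ⟨sectSt τ (qsOf τ g) u, ?_, ?_⟩
  · rw [sectSt_length]
    exact Finset.le_sup (f := fun g => (qsOf τ g).length) (hFfin.mem_toFinset.mpr hg)
  · conv_lhs => rw [hspec]
    exact sect_prod τ _ u

end PsetSec

end Mealy

namespace Mealy

variable {Q A : Type*}

section EquiSec

variable {τ : Q → A → A × Q} (F : Set (Function.End (List A)))

/-- `β` witnesses that the words `u` and `v` have isomorphic pointed labeled orbit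
configurations. -/
structure IsEqui (u v : List A) (β : List A → List A) : Prop where
  mapsTo : Set.MapsTo β (Orb F u) (Orb F v)
  injOn : Set.InjOn β (Orb F u)
  surjOn : Set.SurjOn β (Orb F u) (Orb F v)
  base : β u = v
  comm : ∀ g ∈ F, ∀ x ∈ Orb F u, β (g x) = g (β x)
  lab : ∀ g ∈ F, ∀ x ∈ Orb F u, sect g x = sect g (β x)

/-- the words `u` and `v` have isomorphic pointed labeled orbit configurations -/
def Equi (u v : List A) : Prop := ∃ β, IsEqui F u v β

variable {F}

lemma Equi.refl (u : List A) : Equi F u u :=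
  ⟨id, ⟨Set.mapsTo_id _, Set.injOn_id _, Set.surjOn_id _, rfl,
    fun _ _ _ _ => rfl, fun _ _ _ _ => rfl⟩⟩

/-- Claim A: the behaviour of every element of the monoid transfers along `β`. -/
lemma claimA (hFS : ∀ g ∈ F, g ∈ Sgp τ) {u v : List A} {β : List A → List A}
    (h : IsEqui F u v β) {t : Function.End (List A)} (ht : Mem F t) :
    (∀ x ∈ Orb F u, β (t x) = t (β x)) ∧ (∀ x ∈ Orb F u, sect t x = sect t (β x)) := by
  suffices H : ∀ l : List (Function.End (List A)), (∀ x ∈ l, x ∈ F) →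
      (∀ x ∈ Orb F u, β (l.prod x) = l.prod (β x)) ∧
        (∀ x ∈ Orb F u, sect l.prod x = sect l.prod (β x)) by
    obtain ⟨l, hl, rfl⟩ := ht
    exact H l hl
  intro l
  induction l with
  | nil =>
    intro _
    constructor
    · intro x _; rfl
    · intro x _
      simp only [List.prod_nil, sect_one]
  | cons g l ih =>
    intro hl
    have hg : g ∈ F := hl g (by simp)
    have hl' : ∀ x ∈ l, x ∈ F := fun x hx => hl x (by simp [hx])
    have ihs := ih hl'
    have hmem : Mem F l.prod := ⟨l, hl', rfl⟩
    have hsp := hmem.lp_sp hFS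
    rw [List.prod_cons]
    constructor
    · intro x hx
      have hsx : l.prod x ∈ Orb F u := act_mem_orb hx hmem
      rw [end_mul_apply, h.comm g hg _ hsx, ihs.1 x hx]
      rfl
    · intro x hx
      have hsx : l.prod x ∈ Orb F u := act_mem_orb hx hmem
      rw [sect_mul hsp.1 hsp.2, sect_mul hsp.1 hsp.2]
      rw [h.lab g hg _ hsx, ihs.1 x hx, ihs.2 x hx]

lemma IsEqui.symm (h : IsEqui F u v β) : ∃ β', IsEqui F v u β' := by
  classical
  refine ⟨fun y => if hy : y ∈ Orb F v then Classical.choose (h.surjOn hy) else y, ?_⟩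
  have hspec : ∀ y (hy : y ∈ Orb F v),
      Classical.choose (h.surjOn hy) ∈ Orb F u ∧
        β (Classical.choose (h.surjOn hy)) = y := by
    intro y hy
    obtain ⟨h1, h2⟩ := Classical.choose_spec (h.surjOn hy)
    exact ⟨h1, h2⟩
  set β' : List A → List A := fun y => if hy : y ∈ Orb F v then
    Classical.choose (h.surjOn hy) else y with hβ'
  have hp1 : ∀ y ∈ Orb F v, β' y ∈ Orb F u ∧ β (β' y) = y := by
    intro y hy
    rw [hβ']
    simp only [dif_pos hy]
    exact hspec y hy
  have hp2 : ∀ x ∈ Orb F u, β' (β x) = x := by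
    intro x hx
    have hβx : β x ∈ Orb F v := h.mapsTo hx
    have h1 := hp1 (β x) hβx
    exact h.injOn h1.1 hx h1.2
  constructor
  · intro y hy
    exact (hp1 y hy).1
  · intro y hy y' hy' heq
    rw [← (hp1 y hy).2, ← (hp1 y' hy').2, heq]
  · intro x hx
    exact ⟨β x, h.mapsTo hx, hp2 x hx⟩
  · rw [← h.base]
    exact hp2 u (self_mem_orb u)
  · intro g hg y hy
    have hx := (hp1 y hy).1
    have hkey : β (g (β' y)) = g y := by rw [h.comm g hg _ hx, (hp1 y hy).2]
    have hgu : g (β' y) ∈ Orb F u := act_mem_orb hx (Mem.gen hg)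
    calc β' (g y) = β' (β (g (β' y))) := by rw [hkey]
    _ = g (β' y) := hp2 _ hgu
  · intro g hg y hy
    have hx := (hp1 y hy).1
    rw [h.lab g hg _ hx, (hp1 y hy).2]

lemma Equi.symm {u v : List A} (h : Equi F u v) : Equi F v u := by
  obtain ⟨β, hβ⟩ := h
  exact hβ.symm

lemma Equi.trans {u v w : List A} (h1 : Equi F u v) (h2 : Equi F v w) : Equi F u w := by
  obtain ⟨β1, h1⟩ := h1
  obtain ⟨β2, h2⟩ := h2
  refine ⟨β2 ∘ β1, ?_, ?_, ?_, ?_, ?_, ?_⟩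
  · exact h2.mapsTo.comp h1.mapsTo
  · exact h2.injOn.comp h1.injOn h1.mapsTo
  · exact h2.surjOn.comp h1.surjOn
  · simp only [Function.comp_apply, h1.base, h2.base]
  · intro g hg x hx
    simp only [Function.comp_apply, h1.comm g hg x hx, h2.comm g hg _ (h1.mapsTo hx)]
  · intro g hg x hx
    simp only [Function.comp_apply]
    rw [h1.lab g hg x hx, h2.lab g hg _ (h1.mapsTo hx)]

/-- well-definedness of the successor isomorphism -/
lemma snoc_wd (hFS : ∀ g ∈ F, g ∈ Sgp τ) {u v : List A} {β : List A → List A}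
    (h : IsEqui F u v β) {t s : Function.End (List A)} (ht : Mem F t) (hs : Mem F s)
    (a : A) (heq : t (u ++ [a]) = s (u ++ [a])) : t (v ++ [a]) = s (v ++ [a]) := by
  have hts := ht.lp_sp hFS
  have hss := hs.lp_sp hFS
  rw [hts.2 u [a], hss.2 u [a]] at heq
  have hlen : (t u).length = (s u).length := by rw [hts.1 u, hss.1 u]
  obtain ⟨h1, h2⟩ := List.append_inj heq hlen
  have cA_t := claimA hFS h ht
  have cA_s := claimA hFS h hs
  have hu : u ∈ Orb F u := self_mem_orb u
  have htv : t v = s v := by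
    have e1 : β (t u) = t v := by rw [cA_t.1 u hu, h.base]
    have e2 : β (s u) = s v := by rw [cA_s.1 u hu, h.base]
    rw [← e1, ← e2, h1]
  have hsect : sect t v [a] = sect s v [a] := by
    have e1 : sect t u = sect t v := by rw [cA_t.2 u hu, h.base]
    have e2 : sect s u = sect s v := by rw [cA_s.2 u hu, h.base]
    rw [← e1, ← e2, h2]
  rw [hts.2 v [a], hss.2 v [a], htv, hsect]

/-- the equivalence is a right congruence -/
lemma Equi.snoc (hFS : ∀ g ∈ F, g ∈ Sgp τ) {u v : List A} (h : Equi F u v) (a : A) :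
    Equi F (u ++ [a]) (v ++ [a]) := by
  classical
  obtain ⟨β, hβ⟩ := h
  obtain ⟨β', hβ'⟩ := hβ.symm
  set βp : List A → List A := fun x => if hx : x ∈ Orb F (u ++ [a]) then
    (Classical.choose hx) (v ++ [a]) else x with hβp
  have happ : ∀ t : Function.End (List A), Mem F t →
      βp (t (u ++ [a])) = t (v ++ [a]) := by
    intro t ht
    have hx : t (u ++ [a]) ∈ Orb F (u ++ [a]) := ⟨t, ht, rfl⟩
    rw [hβp]
    simp only [dif_pos hx]
    obtain ⟨ht0, heq0⟩ := Classical.choose_spec hx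
    exact snoc_wd hFS hβ ht0 ht a heq0
  refine ⟨βp, ?_, ?_, ?_, ?_, ?_, ?_⟩
  · rintro x ⟨t, ht, rfl⟩
    rw [happ t ht]
    exact ⟨t, ht, rfl⟩
  · rintro x ⟨t, ht, rfl⟩ x' ⟨s, hs, rfl⟩ heq
    rw [happ t ht, happ s hs] at heq
    exact snoc_wd hFS hβ' ht hs a heq
  · rintro y ⟨t, ht, rfl⟩
    exact ⟨t (u ++ [a]), ⟨t, ht, rfl⟩, happ t ht⟩
  · have := happ 1 Mem.one
    simpa only [end_one_apply] using this
  · intro g hg x hx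
    obtain ⟨t, ht, rfl⟩ := hx
    have h1 : g (t (u ++ [a])) = (g * t) (u ++ [a]) := rfl
    rw [h1, happ _ ((Mem.gen hg).mul ht), happ t ht]
    rfl
  · intro g hg x hx
    obtain ⟨t, ht, rfl⟩ := hx
    have hts := ht.lp_sp hFS
    have cA_t := claimA hFS hβ ht
    have hu : u ∈ Orb F u := self_mem_orb u
    have e1 : sect t u = sect t v := by rw [cA_t.2 u hu, hβ.base]
    have e2 : β (t u) = t v := by rw [cA_t.1 u hu, hβ.base]
    rw [happ t ht, hts.2 u [a], hts.2 v [a], ← e1]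
    rw [sect_append, sect_append]
    have htu : t u ∈ Orb F u := ⟨t, ht, rfl⟩
    rw [hβ.lab g hg _ htu, e2]

end EquiSec

end Mealy

namespace Mealy

variable {Q A : Type*}

section PhiSec

variable [Fintype A]

/-- shortlex-compatible encoding of words into ℕ -/
noncomputable def phi (u : List A) : ℕ :=
  u.foldl (fun n a => n * (Fintype.card A + 1) + ((Fintype.equivFin A a : ℕ) + 1)) 0

lemma phi_snoc (u : List A) (a : A) :
    phi (u ++ [a]) = phi u * (Fintype.card A + 1) + ((Fintype.equivFin A a : ℕ) + 1) := by
  simp [phi, List.foldl_append]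

lemma phi_lt (u : List A) : phi u < (Fintype.card A + 1) ^ u.length := by
  induction u using List.reverseRecOn with
  | nil => simp [phi]
  | append_singleton u a ih =>
    rw [phi_snoc]
    have hcode : (Fintype.equivFin A a : ℕ) + 1 ≤ Fintype.card A := by
      have := (Fintype.equivFin A a).isLt
      omega
    have : phi u * (Fintype.card A + 1) + (Fintype.card A + 1) ≤
        (Fintype.card A + 1) ^ u.length * (Fintype.card A + 1) := by
      have := Nat.succ_le_of_lt ih
      calc phi u * (Fintype.card A + 1) + (Fintype.card A + 1)
          = (phi u + 1) * (Fintype.card A + 1) := by ring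
        _ ≤ (Fintype.card A + 1) ^ u.length * (Fintype.card A + 1) :=
            Nat.mul_le_mul_right _ this
    have hpow : (Fintype.card A + 1) ^ u.length * (Fintype.card A + 1) =
        (Fintype.card A + 1) ^ (u ++ [a]).length := by
      simp [pow_succ]
    omega

lemma phi_ge (u : List A) (hu : u ≠ []) :
    (Fintype.card A + 1) ^ (u.length - 1) ≤ phi u := by
  induction u using List.reverseRecOn with
  | nil => simp at hu
  | append_singleton u a ih =>
    rw [phi_snoc]
    rcases eq_or_ne u [] with rfl | hne
    · have h0 : phi ([] : List A) = 0 := rfl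
      simp only [List.nil_append, List.length_singleton, h0]
      norm_num
    · have h1 := ih hne
      have hlen : 1 ≤ u.length := List.length_pos_of_ne_nil hne
      have : (Fintype.card A + 1) ^ (u.length - 1) * (Fintype.card A + 1) ≤
          phi u * (Fintype.card A + 1) := Nat.mul_le_mul_right _ h1
      have hp : (Fintype.card A + 1) ^ (u.length - 1) * (Fintype.card A + 1) =
          (Fintype.card A + 1) ^ u.length := by
        rw [← pow_succ]
        congr 1
        omega
      have hlen2 : (u ++ [a]).length - 1 = u.length := by simp
      rw [hlen2]
      omega

/-- strict monotonicity in length -/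
lemma phi_length_lt {u v : List A} (h : u.length < v.length) : phi u < phi v := by
  have h1 := phi_lt u
  have hv : v ≠ [] := by
    intro hv
    rw [hv] at h
    simp at h
  have h2 := phi_ge v hv
  have h3 : (Fintype.card A + 1) ^ u.length ≤ (Fintype.card A + 1) ^ (v.length - 1) :=
    Nat.pow_le_pow_right (by omega) (by omega)
  omega

/-- strict monotonicity under appending a common letter, for equal lengths -/
lemma phi_snoc_lt {u v : List A} (_hlen : u.length = v.length) (h : phi u < phi v)
    (a : A) : phi (u ++ [a]) < phi (v ++ [a]) := by
  rw [phi_snoc, phi_snoc]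
  have : phi u * (Fintype.card A + 1) < phi v * (Fintype.card A + 1) := by
    exact Nat.mul_lt_mul_of_lt_of_le h (le_refl _) (by omega)
  omega

end PhiSec

end Mealy

namespace Mealy

variable {Q A : Type*}

section WSec

variable [Fintype A] {τ : Q → A → A × Q} (F : Set (Function.End (List A)))

/-- the set of `phi`-minimal representatives of equivalence classes -/
def Wset : Set (List A) := {w | ∀ w', Equi F w w' → phi w ≤ phi w'}

variable {F}

lemma W_covers (w : List A) : ∃ u, u ∈ Wset F ∧ Equi F w u := by
  classical
  set S : Set ℕ := phi '' {w' | Equi F w w'} with hS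
  have hne : S.Nonempty := ⟨phi w, w, Equi.refl w, rfl⟩
  have hmem := Nat.sInf_mem hne
  obtain ⟨w', hw', hphi⟩ := hmem
  refine ⟨w', ?_, hw'⟩
  intro z hz
  have hwz : Equi F w z := hw'.trans hz
  have : phi z ∈ S := ⟨z, hwz, rfl⟩
  rw [hphi]
  exact Nat.sInf_le this

lemma W_snoc_closed (hFS : ∀ g ∈ F, g ∈ Sgp τ) {p : List A} {a : A}
    (h : p ++ [a] ∈ Wset F) : p ∈ Wset F := by
  intro p' hp'
  by_contra hcon
  push_neg at hcon
  have hsn : Equi F (p ++ [a]) (p' ++ [a]) := hp'.snoc hFS a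
  have hle := h _ hsn
  rcases lt_trichotomy p'.length p.length with hlt | heq | hgt
  · have : phi (p' ++ [a]) < phi (p ++ [a]) := phi_length_lt (by simp [hlt])
    omega
  · have : phi (p' ++ [a]) < phi (p ++ [a]) := phi_snoc_lt heq hcon a
    omega
  · have : phi p < phi p' := phi_length_lt hgt
    omega

lemma W_prefix_closed (hFS : ∀ g ∈ F, g ∈ Sgp τ) {p w : List A} (hpre : p <+: w)
    (hw : w ∈ Wset F) : p ∈ Wset F := by
  obtain ⟨r, rfl⟩ := hpre
  induction r using List.reverseRecOn generalizing p with
  | nil => simpa using hw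
  | append_singleton r a ih =>
    have h1 : p ++ (r ++ [a]) = (p ++ r) ++ [a] := by simp
    rw [h1] at hw
    have h2 := W_snoc_closed hFS hw
    exact ih h2

variable (F)

/-- the elements of `Wset` extending a given prefix -/
def Wext (p : List A) : Set (List A) := {w | w ∈ Wset F ∧ p <+: w}

variable {F}

lemma Wext_step {p : List A} (h : (Wext F p).Infinite) :
    ∃ a : A, (Wext F (p ++ [a])).Infinite := by
  by_contra hc
  push_neg at hc
  have hfin : ∀ a : A, (Wext F (p ++ [a])).Finite := by
    intro a
    exact hc a

  have hsub : Wext F p ⊆ insert p (⋃ a : A, Wext F (p ++ [a])) := by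
    rintro w ⟨hw, r, rfl⟩
    cases r with
    | nil => simp
    | cons a r' =>
      refine Set.mem_insert_iff.mpr (Or.inr ?_)
      refine Set.mem_iUnion.mpr ⟨a, hw, ⟨r', ?_⟩⟩
      simp
  exact h (Set.Finite.subset (Set.Finite.insert p (Set.finite_iUnion hfin)) hsub)

/-- one step in the construction of the branch -/
noncomputable def nextP (x : {p : List A // (Wext F p).Infinite}) :
    {p : List A // (Wext F p).Infinite} :=
  ⟨x.1 ++ [Classical.choose (Wext_step x.2)], Classical.choose_spec (Wext_step x.2)⟩

/-- the branch of minimal representatives, as a sequence of prefixes -/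
noncomputable def prefW (h0 : (Wext F []).Infinite) (n : ℕ) :
    {p : List A // (Wext F p).Infinite} :=
  nextP^[n] ⟨[], h0⟩

lemma prefW_succ (h0 : (Wext F []).Infinite) (n : ℕ) :
    prefW h0 (n + 1) = nextP (prefW h0 n) :=
  Function.iterate_succ_apply' _ _ _

lemma prefW_zero (h0 : (Wext F []).Infinite) : (prefW h0 0).1 = [] := rfl

lemma prefW_len (h0 : (Wext F []).Infinite) (n : ℕ) : (prefW h0 n).1.length = n := by
  induction n with
  | zero => rfl
  | succ n ih =>
    rw [prefW_succ]
    show ((prefW h0 n).1 ++ [_]).length = n + 1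
    simp [ih]

variable [Nonempty A]

/-- the limit branch -/
noncomputable def xiOf (h0 : (Wext F []).Infinite) : ℕ → A :=
  fun n => ((prefW h0 (n + 1)).1).getD n (Classical.arbitrary A)

lemma xiOf_prefix (h0 : (Wext F []).Infinite) (n : ℕ) :
    (List.range n).map (xiOf h0) = (prefW h0 n).1 := by
  induction n with
  | zero => rfl
  | succ n ih =>
    rw [List.range_succ, List.map_append, ih]
    have hstep : (prefW h0 (n + 1)).1 = (prefW h0 n).1 ++
        [Classical.choose (Wext_step (prefW h0 n).2)] := by
      rw [prefW_succ]; rfl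
    have hxi : xiOf h0 n = Classical.choose (Wext_step (prefW h0 n).2) := by
      show ((prefW h0 (n + 1)).1).getD n _ = _
      rw [hstep, List.getD_append_right _ _ _ _ (by rw [prefW_len]),
        prefW_len]
      simp
    simp only [List.map_cons, List.map_nil]
    rw [hxi, hstep]

omit [Nonempty A] in
lemma prefW_mem (hFS : ∀ g ∈ F, g ∈ Sgp τ) (h0 : (Wext F []).Infinite) (n : ℕ) :
    (prefW h0 n).1 ∈ Wset F := by
  obtain ⟨w, hw, hpre⟩ := Set.Infinite.nonempty (prefW h0 n).2
  exact W_prefix_closed hFS hpre hw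

omit [Nonempty A] in
lemma prefW_nonequi (hFS : ∀ g ∈ F, g ∈ Sgp τ) (h0 : (Wext F []).Infinite)
    {n m : ℕ} (h : n < m) : ¬ Equi F ((prefW h0 n).1) ((prefW h0 m).1) := by
  intro he
  have hm := prefW_mem hFS h0 m
  have hle := hm _ he.symm
  have : phi ((prefW h0 n).1) < phi ((prefW h0 m).1) :=
    phi_length_lt (by rw [prefW_len, prefW_len]; exact h)
  omega

omit [Nonempty A] in
lemma Wset_infinite
    (hnc : ¬ ∃ R : Finset (List A), ∀ w : List A, ∃ u ∈ R, Equi F w u) :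
    (Wext F []).Infinite := by
  have hW : (Wset F).Infinite := by
    by_contra hfin
    rw [Set.not_infinite] at hfin
    refine hnc ⟨hfin.toFinset, ?_⟩
    intro w
    obtain ⟨u, hu, he⟩ := W_covers w
    exact ⟨u, hfin.mem_toFinset.mpr hu, he⟩
  refine hW.mono ?_
  intro w hw
  exact ⟨hw, by simp⟩

end WSec

end Mealy

namespace Mealy

variable {Q A : Type*}

section InvSec

variable [Finite Q] [Fintype A] {τ : Q → A → A × Q} {F : Set (Function.End (List A))}

open Classical in
/-- rank of an orbit element under the canonical enumeration -/
noncomputable def ranknat (hFS : ∀ g ∈ F, g ∈ Sgp τ) (u x : List A) : ℕ :=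
  if hx : x ∈ Ofin hFS u then ((Ofin hFS u).equivFin ⟨x, hx⟩ : ℕ) else 0

open Classical in
/-- canonical enumeration of the orbit -/
noncomputable def enum (hFS : ∀ g ∈ F, g ∈ Sgp τ) (u : List A) (i : ℕ) : List A :=
  if hi : i < (Ofin hFS u).card then
    ((Ofin hFS u).equivFin.symm ⟨i, hi⟩ : List A) else u

omit [Finite Q] in
lemma ranknat_eq (hFS : ∀ g ∈ F, g ∈ Sgp τ) {u x : List A} (hx : x ∈ Ofin hFS u) :
    ranknat hFS u x = ((Ofin hFS u).equivFin ⟨x, hx⟩ : ℕ) := by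
  rw [ranknat, dif_pos hx]

omit [Finite Q] in
lemma enum_eq (hFS : ∀ g ∈ F, g ∈ Sgp τ) {u : List A} {i : ℕ}
    (hi : i < (Ofin hFS u).card) :
    enum hFS u i = ((Ofin hFS u).equivFin.symm ⟨i, hi⟩ : List A) := by
  rw [enum, dif_pos hi]

omit [Finite Q] in
lemma enum_mem (hFS : ∀ g ∈ F, g ∈ Sgp τ) (u : List A) (i : ℕ) :
    enum hFS u i ∈ Orb F u := by
  by_cases hi : i < (Ofin hFS u).card
  · rw [enum_eq hFS hi]
    exact (mem_Ofin hFS).mp ((Ofin hFS u).equivFin.symm ⟨i, hi⟩).2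
  · rw [enum, dif_neg hi]
    exact self_mem_orb u

omit [Finite Q] in
lemma ranknat_lt (hFS : ∀ g ∈ F, g ∈ Sgp τ) {u x : List A} (hx : x ∈ Orb F u) :
    ranknat hFS u x < (Ofin hFS u).card := by
  have hx' : x ∈ Ofin hFS u := (mem_Ofin hFS).mpr hx
  rw [ranknat_eq hFS hx']
  exact ((Ofin hFS u).equivFin ⟨x, hx'⟩).isLt

omit [Finite Q] in
lemma enum_rank (hFS : ∀ g ∈ F, g ∈ Sgp τ) {u x : List A} (hx : x ∈ Orb F u) :
    enum hFS u (ranknat hFS u x) = x := by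
  have hx' : x ∈ Ofin hFS u := (mem_Ofin hFS).mpr hx
  have hlt : ranknat hFS u x < (Ofin hFS u).card := ranknat_lt hFS hx
  rw [enum_eq hFS hlt]
  have : (⟨ranknat hFS u x, hlt⟩ : Fin (Ofin hFS u).card) =
      (Ofin hFS u).equivFin ⟨x, hx'⟩ := Fin.ext (ranknat_eq hFS hx')
  rw [this, Equiv.symm_apply_apply]

omit [Finite Q] in
lemma rank_enum (hFS : ∀ g ∈ F, g ∈ Sgp τ) {u : List A} {i : ℕ}
    (hi : i < (Ofin hFS u).card) : ranknat hFS u (enum hFS u i) = i := by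
  have hmem : enum hFS u i ∈ Ofin hFS u := by
    rw [enum_eq hFS hi]
    exact ((Ofin hFS u).equivFin.symm ⟨i, hi⟩).2
  rw [ranknat_eq hFS hmem]
  have : (⟨enum hFS u i, hmem⟩ : {x // x ∈ Ofin hFS u}) =
      (Ofin hFS u).equivFin.symm ⟨i, hi⟩ := Subtype.ext (enum_eq hFS hi)
  rw [this, Equiv.apply_symm_apply]

/-- the finite type of invariants -/
def InvT (hFfin : F.Finite) (hP : (Pset τ F hFfin).Finite) (K : ℕ) : Type _ :=
  Fin (K + 1) × Fin (K + 1) ×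
    ((Fin K × {g // g ∈ hFfin.toFinset}) → Fin (K + 1)) ×
    ((Fin K × {g // g ∈ hFfin.toFinset}) → {p // p ∈ hP.toFinset})

instance (hFfin : F.Finite) (hP : (Pset τ F hFfin).Finite) (K : ℕ) :
    Finite (InvT hFfin hP K) := by
  unfold InvT
  infer_instance

/-- the invariant of a word: the abstract isomorphism data of its orbit configuration -/
noncomputable def Inv (hFS : ∀ g ∈ F, g ∈ Sgp τ) (hFfin : F.Finite)
    (hP : (Pset τ F hFfin).Finite) (K : ℕ) (u : List A) : InvT hFfin hP K :=
  ⟨⟨min (Ofin hFS u).card K, by omega⟩,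
   ⟨min (ranknat hFS u u) K, by omega⟩,
   fun ig => ⟨min (ranknat hFS u (ig.2.1 (enum hFS u ig.1))) K, by omega⟩,
   fun ig => ⟨sect ig.2.1 (enum hFS u ig.1), by
     rw [Set.Finite.mem_toFinset]
     exact sect_mem_Pset hFfin hFS (hFfin.mem_toFinset.mp ig.2.2) _⟩⟩

omit [Finite Q] in
lemma equi_of_inv_eq (hFS : ∀ g ∈ F, g ∈ Sgp τ) (hFfin : F.Finite)
    (hP : (Pset τ F hFfin).Finite) {K : ℕ} {u v : List A}
    (hu : (Ofin hFS u).card ≤ K) (hv : (Ofin hFS v).card ≤ K)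
    (h : Inv hFS hFfin hP K u = Inv hFS hFfin hP K v) : Equi F u v := by
  have h1 := congrArg (fun x : InvT hFfin hP K => x.1) h
  have h2 := congrArg (fun x : InvT hFfin hP K => x.2.1) h
  have h3 := congrArg (fun x : InvT hFfin hP K => x.2.2.1) h
  have h4 := congrArg (fun x : InvT hFfin hP K => x.2.2.2) h
  simp only [Inv] at h1 h2 h3 h4
  -- extract card equality
  have hcard : (Ofin hFS u).card = (Ofin hFS v).card := by
    have := congrArg (fun x : Fin (K + 1) => (x : ℕ)) h1
    simp only at this
    omega
  -- extract base rank equality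
  have hbase : ranknat hFS u u = ranknat hFS v v := by
    have := congrArg (fun x : Fin (K + 1) => (x : ℕ)) h2
    simp only at this
    have hru : ranknat hFS u u < (Ofin hFS u).card := ranknat_lt hFS (self_mem_orb u)
    have hrv : ranknat hFS v v < (Ofin hFS v).card := ranknat_lt hFS (self_mem_orb v)
    omega
  -- extract action matrix equality
  have hact : ∀ (i : ℕ), i < (Ofin hFS u).card → ∀ g ∈ F,
      ranknat hFS u (g (enum hFS u i)) = ranknat hFS v (g (enum hFS v i)) := by
    intro i hi g hg
    have hiK : i < K := lt_of_lt_of_le hi hu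
    have := congrArg (fun x : (Fin K × {g // g ∈ hFfin.toFinset}) → Fin (K + 1) =>
      ((x (⟨i, hiK⟩, ⟨g, hFfin.mem_toFinset.mpr hg⟩) : Fin (K + 1)) : ℕ)) h3
    simp only at this
    have hr1 : ranknat hFS u (g (enum hFS u i)) < (Ofin hFS u).card :=
      ranknat_lt hFS (act_mem_orb (enum_mem hFS u i) (Mem.gen hg))
    have hr2 : ranknat hFS v (g (enum hFS v i)) < (Ofin hFS v).card :=
      ranknat_lt hFS (act_mem_orb (enum_mem hFS v i) (Mem.gen hg))
    omega
  -- extract label matrix equality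
  have hlab : ∀ (i : ℕ), i < (Ofin hFS u).card → ∀ g ∈ F,
      sect g (enum hFS u i) = sect g (enum hFS v i) := by
    intro i hi g hg
    have hiK : i < K := lt_of_lt_of_le hi hu
    have := congrArg (fun x : (Fin K × {g // g ∈ hFfin.toFinset}) →
        {p // p ∈ hP.toFinset} =>
      (x (⟨i, hiK⟩, ⟨g, hFfin.mem_toFinset.mpr hg⟩)).1) h4
    simpa only using this
  -- build the isomorphism
  classical
  set β : List A → List A := fun x => if hx : x ∈ Orb F u then
    enum hFS v (ranknat hFS u x) else x with hβ
  have hβ_app : ∀ x ∈ Orb F u, β x = enum hFS v (ranknat hFS u x) := by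
    intro x hx
    rw [hβ]
    simp only [dif_pos hx]
  have hβ_mem : ∀ x ∈ Orb F u, β x ∈ Orb F v := by
    intro x hx
    rw [hβ_app x hx]
    exact enum_mem hFS v _
  refine ⟨β, ?_, ?_, ?_, ?_, ?_, ?_⟩
  · exact hβ_mem
  · intro x hx x' hx' heq
    rw [hβ_app x hx, hβ_app x' hx'] at heq
    have e1 : ranknat hFS u x < (Ofin hFS v).card := by
      rw [← hcard]; exact ranknat_lt hFS hx
    have e2 : ranknat hFS u x' < (Ofin hFS v).card := by
      rw [← hcard]; exact ranknat_lt hFS hx'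
    have heqr : ranknat hFS u x = ranknat hFS u x' := by
      have := congrArg (ranknat hFS v) heq
      rwa [rank_enum hFS e1, rank_enum hFS e2] at this
    rw [← enum_rank hFS hx, ← enum_rank hFS hx', heqr]
  · intro y hy
    refine ⟨enum hFS u (ranknat hFS v y), enum_mem hFS u _, ?_⟩
    have hylt : ranknat hFS v y < (Ofin hFS u).card := by
      rw [hcard]; exact ranknat_lt hFS hy
    rw [hβ_app _ (enum_mem hFS u _), rank_enum hFS hylt]
    exact enum_rank hFS hy
  · rw [hβ_app u (self_mem_orb u), hbase]
    exact enum_rank hFS (self_mem_orb v)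
  · intro g hg x hx
    have hgx : g x ∈ Orb F u := act_mem_orb hx (Mem.gen hg)
    rw [hβ_app _ hgx, hβ_app x hx]
    have hi : ranknat hFS u x < (Ofin hFS u).card := ranknat_lt hFS hx
    have key := hact _ hi g hg
    rw [enum_rank hFS hx] at key
    rw [key]
    have hgv : g (enum hFS v (ranknat hFS u x)) ∈ Orb F v :=
      act_mem_orb (enum_mem hFS v _) (Mem.gen hg)
    exact enum_rank hFS hgv
  · intro g hg x hx
    have hi : ranknat hFS u x < (Ofin hFS u).card := ranknat_lt hFS hx
    have key := hlab _ hi g hg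
    rw [enum_rank hFS hx] at key
    rw [hβ_app x hx]
    exact key

/-- pigeonhole: a sequence of words with uniformly bounded orbit size contains two
equivalent words -/
lemma exists_equi_of_card_bounded (hFS : ∀ g ∈ F, g ∈ Sgp τ) (hFfin : F.Finite)
    (p : ℕ → List A) (K : ℕ) (hb : ∀ n, (Ofin hFS (p n)).card ≤ K) :
    ∃ n m, n ≠ m ∧ Equi F (p n) (p m) := by
  have hP : (Pset τ F hFfin).Finite := Pset_finite hFfin
  obtain ⟨n, m, hnm, heq⟩ :=
    Finite.exists_ne_map_eq_of_infinite (fun n : ℕ => Inv hFS hFfin hP K (p n))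
  exact ⟨n, m, hnm, equi_of_inv_eq hFS hFfin hP (hb n) (hb m) heq⟩

end InvSec

end Mealy

namespace Mealy

variable {Q A : Type*}

section FinalSec

variable {τ : Q → A → A × Q} {F : Set (Function.End (List A))}

/-- if finitely many words cover all equivalence classes, the monoid is finite -/
lemma mem_finite_of_coverage [Fintype A] (hFS : ∀ g ∈ F, g ∈ Sgp τ)
    (hcov : ∃ R : Finset (List A), ∀ w : List A, ∃ u ∈ R, Equi F w u) :
    {t : Function.End (List A) | Mem F t}.Finite := by
  classical
  obtain ⟨R, hR⟩ := hcov
  rw [← Set.finite_coe_iff]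
  have hΦ : ∀ t : {t : Function.End (List A) | Mem F t}, ∀ u : R,
      t.1 u.1 ∈ Ofin hFS u.1 := by
    intro t u
    exact (mem_Ofin hFS).mpr ⟨t.1, t.2, rfl⟩
  refine Finite.of_injective
    (fun t : {t : Function.End (List A) | Mem F t} =>
      (fun u : R => (⟨t.1 u.1, hΦ t u⟩ : {x // x ∈ Ofin hFS u.1}))) ?_
  intro t t' heq
  apply Subtype.ext
  funext w
  obtain ⟨u, hu, hequi⟩ := hR w
  obtain ⟨β, hβ⟩ := hequi
  have cA_t := claimA hFS hβ t.2
  have cA_t' := claimA hFS hβ t'.2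
  have hw : w ∈ Orb F w := self_mem_orb w
  have e1 : β (t.1 w) = t.1 u := by rw [cA_t.1 w hw, hβ.base]
  have e2 : β (t'.1 w) = t'.1 u := by rw [cA_t'.1 w hw, hβ.base]
  have hval : t.1 u = t'.1 u := by
    have h5 := congrFun heq ⟨u, hu⟩
    exact congrArg Subtype.val h5
  have : β (t.1 w) = β (t'.1 w) := by rw [e1, e2, hval]
  exact hβ.injOn ⟨t.1, t.2, rfl⟩ ⟨t'.1, t'.2, rfl⟩ this

/-- the prefixes of the `extω`-image compute the action on prefixes -/
lemma extω_prefix (hFS : ∀ g ∈ F, g ∈ Sgp τ) {t : Function.End (List A)}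
    (ht : Mem F t) (ξ : ℕ → A) (n : ℕ) :
    (List.range n).map (extω t ξ) = t ((List.range n).map ξ) := by
  have hsp := ht.lp_sp hFS
  induction n with
  | zero =>
    simp only [List.range_zero, List.map_nil]
    symm
    rw [← List.length_eq_zero_iff]
    rw [hsp.1]
    rfl
  | succ n ih =>
    rw [List.range_succ, List.map_append, List.map_append, ih]
    simp only [List.map_cons, List.map_nil]
    rw [hsp.2 ((List.range n).map ξ) [ξ n]]
    congr 1
    have hlen1 : (sect t ((List.range n).map ξ) [ξ n]).length = 1 :=
      (hsp.1.sect _) [ξ n]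
    obtain ⟨b, hb⟩ := List.length_eq_one_iff.mp hlen1
    rw [hb]
    congr 1
    show (t ((List.range (n + 1)).map ξ)).getD n (ξ n) = b
    rw [List.range_succ, List.map_append, hsp.2 ((List.range n).map ξ)]
    simp only [List.map_cons, List.map_nil]
    rw [hb, List.getD_append_right]
    · have hlen2 : (t ((List.range n).map ξ)).length = n := by
        rw [hsp.1]
        simp
      rw [hlen2]
      simp
    · rw [hsp.1]
      simp

/-- if orbit sizes along the branch are unbounded, the ω-orbit is infinite -/
lemma image_infinite [Fintype A] (hFS : ∀ g ∈ F, g ∈ Sgp τ) (ξ : ℕ → A)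
    (hub : ∀ K, ∃ n, K < (Ofin hFS ((List.range n).map ξ)).card) :
    ((fun t => extω t ξ) '' {t : Function.End (List A) | Mem F t}).Infinite := by
  by_contra h
  rw [Set.not_infinite] at h
  obtain ⟨n, hn⟩ := hub (((fun t => extω t ξ) '' {t : Function.End (List A) | Mem F t}).ncard)
  have hsub : Orb F ((List.range n).map ξ) ⊆
      (fun η : ℕ → A => (List.range n).map η) ''
        ((fun t => extω t ξ) '' {t : Function.End (List A) | Mem F t}) := by
    rintro x ⟨t, ht, rfl⟩
    exact ⟨extω t ξ, ⟨t, ht, rfl⟩, extω_prefix hFS ht ξ n⟩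
  have h1 := Set.ncard_le_ncard hsub (h.image _)
  have h2 := Set.ncard_image_le (f := fun η : ℕ → A => (List.range n).map η) h
  have h3 : (Ofin hFS ((List.range n).map ξ)).card =
      (Orb F ((List.range n).map ξ)).ncard :=
    (Set.ncard_eq_toFinset_card _ _).symm
  omega

end FinalSec

end Mealy

namespace Mealy

variable {Q A : Type*}

/-- the monoid generated by `F`, as a subsemigroup -/
def Msub (F : Set (Function.End (List A))) : Subsemigroup (Function.End (List A)) where
  carrier := {t | Mem F t}
  mul_mem' := fun ha hb => Mem.mul ha hb

lemma mem_subset_insert_one {F : Set (Function.End (List A))}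
    {T : Subsemigroup (Function.End (List A))} (hFT : F ⊆ (T : Set _))
    {t : Function.End (List A)} (ht : Mem F t) :
    t ∈ insert (1 : Function.End (List A)) (T : Set (Function.End (List A))) := by
  suffices H : ∀ l : List (Function.End (List A)), (∀ x ∈ l, x ∈ F) →
      l.prod ∈ insert (1 : Function.End (List A)) (T : Set (Function.End (List A))) by
    obtain ⟨l, hl, rfl⟩ := ht
    exact H l hl
  intro l
  induction l with
  | nil => intro _; exact Set.mem_insert _ _
  | cons g l ih =>
    intro hl
    have hg : g ∈ (T : Set (Function.End (List A))) := hFT (hl g (by simp))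
    have hrest := ih (fun x hx => hl x (by simp [hx]))
    rw [List.prod_cons]
    rcases Set.mem_insert_iff.mp hrest with h1 | h1
    · rw [h1, mul_one]
      exact Set.mem_insert_iff.mpr (Or.inr hg)
    · exact Set.mem_insert_iff.mpr (Or.inr (T.mul_mem hg h1))

end Mealy

namespace Mealy

/-- For a Mealy automaton with `Q` and `A` finite and `S` the generated
semigroup, a finitely generated subsemigroup `T ≤ S` is infinite iff some
right-infinite word has infinite `T`-orbit. -/
theorem subsemigroup_infinite_iff_exists_infinite_orbit {Q A : Type*} [Finite Q] [Finite A]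
    (τ : Q → A → A × Q) (T : Subsemigroup (Function.End (List A)))
    (hTS : (T : Set (Function.End (List A))) ⊆ (Sgp τ : Set (Function.End (List A))))
    (hfg : ∃ F : Set (Function.End (List A)), F.Finite ∧ T = Subsemigroup.closure F) :
    (T : Set (Function.End (List A))).Infinite ↔
      ∃ ξ : ℕ → A, ((fun f : Function.End (List A) => extω f ξ) ''
        (T : Set (Function.End (List A)))).Infinite := by
  constructor
  · intro hinf
    obtain ⟨F, hFfin, hTF⟩ := hfg
    by_cases hA : Nonempty A
    · haveI := hA
      haveI : Fintype A := Fintype.ofFinite A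
      have hFT : F ⊆ (T : Set (Function.End (List A))) := by
        rw [hTF]; exact Subsemigroup.subset_closure
      have hFS : ∀ g ∈ F, g ∈ Sgp τ := fun g hg => hTS (hFT hg)
      by_cases hcov : ∃ R : Finset (List A), ∀ w : List A, ∃ u ∈ R, Equi F w u
      · exfalso
        have hMfin := mem_finite_of_coverage hFS hcov
        have hsub : (T : Set (Function.End (List A))) ⊆ {t | Mem F t} := by
          have hle : T ≤ Msub F := by
            rw [hTF]
            exact Subsemigroup.closure_le.mpr (fun g hg => Mem.gen hg)
          exact hle
        exact hinf (hMfin.subset hsub)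
      · have h0 := Wset_infinite hcov
        refine ⟨xiOf h0, ?_⟩
        have hub : ∀ K, ∃ n, K < (Ofin hFS ((List.range n).map (xiOf h0))).card := by
          intro K
          by_contra hc
          push_neg at hc
          obtain ⟨n, m, hnm, hequi⟩ :=
            exists_equi_of_card_bounded hFS hFfin
              (fun n => (List.range n).map (xiOf h0)) K hc
          simp only [xiOf_prefix h0] at hequi
          rcases lt_or_gt_of_ne hnm with h | h
          · exact prefW_nonequi hFS h0 h hequi
          · exact prefW_nonequi hFS h0 h hequi.symm
        have himg := image_infinite hFS (xiOf h0) hub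
        have hmono : ((fun t => extω t (xiOf h0)) '' {t | Mem F t}) ⊆
            insert (extω 1 (xiOf h0))
              ((fun f : Function.End (List A) => extω f (xiOf h0)) ''
                (T : Set (Function.End (List A)))) := by
          rintro η ⟨t, ht, rfl⟩
          have hins := mem_subset_insert_one hFT ht
          rcases Set.mem_insert_iff.mp hins with h1 | h1
          · exact Set.mem_insert_iff.mpr (Or.inl (by rw [h1]))
          · exact Set.mem_insert_iff.mpr (Or.inr ⟨t, h1, rfl⟩)
        have hbig := himg.mono hmono
        by_contra hfin
        rw [Set.not_infinite] at hfin
        exact hbig (hfin.insert _)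
    · exfalso
      have hnil : ∀ l : List A, l = [] := by
        intro l
        cases l with
        | nil => rfl
        | cons a _ => exact absurd ⟨a⟩ hA
      haveI hss : Subsingleton (Function.End (List A)) :=
        ⟨fun f g => funext fun l => by rw [hnil (f l), hnil (g l)]⟩
      haveI : Finite (Function.End (List A)) := Finite.of_subsingleton
      exact hinf (Set.toFinite _)
  · rintro ⟨ξ, hξ⟩
    by_contra hT
    rw [Set.not_infinite] at hT
    exact hξ (hT.image _)


end Mealy
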